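/- Let λ > 0. There do not exist functions x, θ : ℝ → ℝ, differentiable on [0, ∞), such that x(0) > 0, θ(s) ∈ (0, π/2) for all s ≥ 0, and for all s ≥ 0: x'(s) = cos θ(s) and θ'(s) sin θ(s) = x(s)(cos θ(s) + λ). -/

import Mathlib

open Real

/-- For `λ > 0` there is no global solution on `[0, ∞)` of the
generating-curve system with `x(0) > 0` and `θ` staying in `(0, π/2)`. -/
theorem rotational_translator_angle_must_reach_pi_div_two
    (lam : ℝ) (hlam : 0 < lam) :
    ¬ ∃ x θ θ' : ℝ → ℝ,
      0 < x 0 ∧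
      (∀ s : ℝ, 0 ≤ s → θ s ∈ Set.Ioo 0 (π / 2)) ∧
      (∀ s : ℝ, 0 ≤ s → HasDerivWithinAt x (Real.cos (θ s)) (Set.Ici 0) s) ∧
      (∀ s : ℝ, 0 ≤ s → HasDerivWithinAt θ (θ' s) (Set.Ici 0) s) ∧
      (∀ s : ℝ, 0 ≤ s → θ' s * Real.sin (θ s) = x s * (Real.cos (θ s) + lam)) := by
  rintro ⟨x, θ, θ', hx0, hθmem, hxderiv, hθderiv, heq⟩
  have hint : interior (Set.Ici (0:ℝ)) = Set.Ioi 0 := interior_Ici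
  -- cos θ s > 0, sin θ s > 0, sin θ s ≤ 1 for s ≥ 0
  have hcos : ∀ s : ℝ, 0 ≤ s → 0 < Real.cos (θ s) := fun s hs => by
    have h := hθmem s hs
    exact Real.cos_pos_of_mem_Ioo ⟨by linarith [h.1, pi_pos], h.2⟩
  have hsin : ∀ s : ℝ, 0 ≤ s → 0 < Real.sin (θ s) := fun s hs => by
    have h := hθmem s hs
    exact Real.sin_pos_of_pos_of_lt_pi h.1 (by linarith [h.2, pi_pos])
  -- x is monotone on Ici 0
  have hxmono : MonotoneOn x (Set.Ici 0) := by
    apply monotoneOn_of_hasDerivWithinAt_nonneg (convex_Ici 0)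
      (fun s hs => (hxderiv s hs).continuousWithinAt)
      (f' := fun s => Real.cos (θ s))
    · intro s hs
      rw [hint] at hs ⊢
      exact (hxderiv s (le_of_lt hs)).mono Set.Ioi_subset_Ici_self
    · intro s hs
      rw [hint] at hs
      exact (hcos s (le_of_lt hs)).le
  have hxge : ∀ s : ℝ, 0 ≤ s → x 0 ≤ x s := fun s hs =>
    hxmono (Set.self_mem_Ici) hs hs
  -- θ' s ≥ x 0 * lam
  have hθ'ge : ∀ s : ℝ, 0 ≤ s → x 0 * lam ≤ θ' s := by
    intro s hs
    have hsins := hsin s hs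
    have hsle : Real.sin (θ s) ≤ 1 := Real.sin_le_one _
    have h1 : x 0 * lam * Real.sin (θ s) ≤ θ' s * Real.sin (θ s) := by
      rw [heq s hs]
      have hx := hxge s hs
      have hc := hcos s hs
      nlinarith [mul_pos hx0 hlam]
    have h2 : x 0 * lam ≤ x 0 * lam * (1 / Real.sin (θ s)) * Real.sin (θ s) := by
      field_simp; exact le_rfl
    calc x 0 * lam ≤ x 0 * lam * Real.sin (θ s) / Real.sin (θ s) := by
          field_simp; exact le_rfl
      _ ≤ θ' s * Real.sin (θ s) / Real.sin (θ s) := by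
          exact div_le_div_of_nonneg_right h1 hsins.le |>.trans_eq rfl
      _ = θ' s := by field_simp
  -- g s = θ s - x0*lam*s is monotone
  set c := x 0 * lam with hc
  have hcpos : 0 < c := mul_pos hx0 hlam
  have hgmono : MonotoneOn (fun s => θ s - c * s) (Set.Ici 0) := by
    apply monotoneOn_of_hasDerivWithinAt_nonneg (convex_Ici 0)
      (f' := fun s => θ' s - c)
    · intro s hs
      exact ((hθderiv s hs).sub ((hasDerivWithinAt_id s _).const_mul c)).continuousWithinAt
    · intro s hs
      rw [hint] at hs ⊢
      have := ((hθderiv s hs.le).sub ((hasDerivWithinAt_id s _).const_mul c)).mono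
        (Set.Ioi_subset_Ici_self (a := (0:ℝ)))
      simp only [mul_one] at this; exact this
    · intro s hs
      rw [hint] at hs
      linarith [hθ'ge s hs.le]
  -- derive contradiction at s = (π/2)/c
  set s₀ := (π / 2) / c with hs₀
  have hs₀pos : 0 < s₀ := div_pos (by positivity) hcpos
  have h1 : θ 0 - c * 0 ≤ θ s₀ - c * s₀ :=
    hgmono Set.self_mem_Ici hs₀pos.le hs₀pos.le
  have hθ0 : 0 < θ 0 := (hθmem 0 le_rfl).1
  have hcs₀ : c * s₀ = π / 2 := by
    field_simp [hs₀]; rw [hs₀]; field_simp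
  have := (hθmem s₀ hs₀pos.le).2
  linarith
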